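/- Let f be a polymorphism of (1in3, Č) of arity n with f(∅) = i. Then: (a) f has no (i+2 mod 4)-set, i.e., there is no X ⊆ [n] with f(X) = (i+2) mod 4; (b) f has no two disjoint (i+1 mod 4)-sets, i.e., there are no disjoint X, Y ⊆ [n] with f(X) = f(Y) = (i+1) mod 4. -/

import Mathlib

/-- `f` is a polymorphism of `(1in3, B)` where `B` has relation `R`:
for every partition of `[n]` into three pairwise disjoint blocks `X, Y, Z`,
the triple of values is in `R`. -/
def IsPolymorphism {n : ℕ} {B : Type*} (R : B → B → B → Prop) (f : Finset (Fin n) → B) : Prop :=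
  ∀ X Y Z : Finset (Fin n), Disjoint X Y → Disjoint X Z → Disjoint Y Z →
    X ∪ Y ∪ Z = Finset.univ → R (f X) (f Y) (f Z)

/-- The relation of `Č`: all coordinate permutations of (0,0,1), (1,1,2), (2,2,3), (3,3,0). -/
def relC (a b c : Fin 4) : Prop :=
  ({a, b, c} : Multiset (Fin 4)) = {0, 0, 1} ∨ ({a, b, c} : Multiset (Fin 4)) = {1, 1, 2} ∨
    ({a, b, c} : Multiset (Fin 4)) = {2, 2, 3} ∨ ({a, b, c} : Multiset (Fin 4)) = {3, 3, 0}

theorem stmt_14 (n : ℕ) (hn : 1 ≤ n) (f : Finset (Fin n) → Fin 4) (hf : IsPolymorphism relC f)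
    (i : Fin 4) (hi : f ∅ = i) :
    (∀ X : Finset (Fin n), f X ≠ i + 2) ∧
      ∀ X Y : Finset (Fin n), Disjoint X Y → ¬(f X = i + 1 ∧ f Y = i + 1) := by
  have key2 : ∀ a b c : Fin 4, relC a b c → a ≠ c + 2 := by unfold relC; decide
  have ha : ∀ X : Finset (Fin n), f X ≠ i + 2 := by
    intro X
    have h := hf X Xᶜ ∅ disjoint_compl_right (Finset.disjoint_empty_right _)
      (Finset.disjoint_empty_right _) (by simp)
    rw [hi] at h
    exact key2 _ _ _ h
  refine ⟨ha, ?_⟩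
  rintro X Y hXY ⟨hX, hY⟩
  have key1 : ∀ a c : Fin 4, relC a a c → c = a + 1 := by unfold relC; decide
  have hd1 : Disjoint X (X ∪ Y)ᶜ :=
    disjoint_compl_right.mono_left Finset.subset_union_left
  have hd2 : Disjoint Y (X ∪ Y)ᶜ :=
    disjoint_compl_right.mono_left Finset.subset_union_right
  have h := hf X Y (X ∪ Y)ᶜ hXY hd1 hd2 (by rw [Finset.union_compl])
  rw [hX, hY] at h
  have := key1 _ _ h
  exact ha _ (by rw [this, add_assoc]; norm_num; rfl)
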